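/- With x as above and f = f₁₂ + f₁₃ + f₂₃ (where f₁₂=[f₁,f₂], f₁₃=[f₁,f₃], f₂₃=[f₂,f₃] in D(2,1;α)), one has [x, f] = -f; moreover setting e = -(1/2)e₁₂ - (1/(2α²))e₁₃ - (1/(2(α+1)²))e₂₃ (with e₁₂=[e₁,e₂] etc.), the triple (e, x, f) satisfies [x,e]=e, [x,f]=-f, [e,f]=x, i.e. it is an sl₂-triple. -/

import Mathlib

open Matrix

/-- The Cartan matrix of `D(2,1;α)`. -/
def cartanD21 (α : ℂ) : Matrix (Fin 3) (Fin 3) ℂ :=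
  !![0, 1, α; 1, 0, -1-α; α, -1-α, 0]

/-- The grading element `x = ((α+1)/(2α))h₁ + (α/(2(α+1)))h₂ + (1/(2α(α+1)))h₃`. -/
noncomputable def xElt (α : ℂ) {g : Type*} [AddCommGroup g] [Module ℂ g]
    (H : Fin 3 → g) : g :=
  ((α+1)/(2*α)) • H 0 + (α/(2*(α+1))) • H 1 + (1/(2*α*(α+1))) • H 2

/-- in `D(2,1;α)` (presented as the contragredient Lie superalgebra with
Cartan matrix `[[0,1,α],[1,0,-1-α],[α,-1-α,0]]`), the elements
`x = ((α+1)/(2α))h₁ + (α/(2(α+1)))h₂ + (1/(2α(α+1)))h₃`, `f = f₁₂+f₁₃+f₂₃` and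
`e = -(1/2)e₁₂ - (1/(2α²))e₁₃ - (1/(2(α+1)²))e₂₃` satisfy `[x,e]=e`, `[x,f]=-f`,
`[e,f]=x`, i.e. `(e,x,f)` is an `sl₂`-triple. -/
theorem d21_sl2_triple (α : ℂ) (hα : α ≠ 0) (hα' : α ≠ -1)
    (g : Type*) [AddCommGroup g] [Module ℂ g]
    (brk : g →ₗ[ℂ] g →ₗ[ℂ] g)
    (E F H : Fin 3 → g)
    -- contragredient relations
    (hEF : ∀ i j, brk (E i) (F j) = if i = j then H i else 0)
    (hFE : ∀ i j, brk (F i) (E j) = if i = j then H j else 0)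
    (hHE : ∀ i j, brk (H i) (E j) = cartanD21 α i j • E j)
    (hHF : ∀ i j, brk (H i) (F j) = -(cartanD21 α i j) • F j)
    (hEH : ∀ i j, brk (E i) (H j) = -(cartanD21 α j i) • E i)
    (hFH : ∀ i j, brk (F i) (H j) = (cartanD21 α j i) • F i)
    (hHH : ∀ i j, brk (H i) (H j) = 0)
    -- the generators `eᵢ, fᵢ` are odd
    (hEE : ∀ i, brk (E i) (E i) = 0)
    (hFF : ∀ i, brk (F i) (F i) = 0)
    (hEsym : ∀ i j, brk (E i) (E j) = brk (E j) (E i))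
    (hFsym : ∀ i j, brk (F i) (F j) = brk (F j) (F i))
    -- super-Jacobi identity for odd generators and any third element
    (hJodd : ∀ u ∈ Set.range E ∪ Set.range F, ∀ v ∈ Set.range E ∪ Set.range F, ∀ c,
        brk u (brk v c) = brk (brk u v) c - brk v (brk u c))
    -- the even Cartan generators act by derivations
    (hJH : ∀ i (a b : g), brk (H i) (brk a b) = brk (brk (H i) a) b + brk a (brk (H i) b)) :
    ∀ e f : g,
      f = brk (F 0) (F 1) + brk (F 0) (F 2) + brk (F 1) (F 2) →
      e = (-(1/2) : ℂ) • brk (E 0) (E 1) + (-(1/(2*α^2))) • brk (E 0) (E 2)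
            + (-(1/(2*(α+1)^2))) • brk (E 1) (E 2) →
      brk (xElt α H) e = e ∧ brk (xElt α H) f = -f ∧ brk e f = xElt α H := by
  intro e f hf he
  have ha1 : α + 1 ≠ 0 := by intro h; apply hα'; linear_combination h
  -- `x` acts as a derivation
  have hxder : ∀ a b, brk (xElt α H) (brk a b)
      = brk (brk (xElt α H) a) b + brk a (brk (xElt α H) b) := by
    intro a b
    simp only [xElt, map_add, _root_.map_smul, LinearMap.add_apply, LinearMap.smul_apply, hJH,
      smul_add, map_add]
    module
  -- `x` acts with eigenvalue `1/2` on each `E j` and `-1/2` on each `F j`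
  have hxE : ∀ j, brk (xElt α H) (E j) = (1/2 : ℂ) • E j := by
    intro j
    simp only [xElt, map_add, LinearMap.add_apply, _root_.map_smul, LinearMap.smul_apply, hHE]
    fin_cases j <;>
    · norm_num [cartanD21, Matrix.cons_val_two, Matrix.vecHead, Matrix.vecTail]
      match_scalars
      all_goals field_simp
      all_goals ring
  have hxF : ∀ j, brk (xElt α H) (F j) = (-(1/2) : ℂ) • F j := by
    intro j
    simp only [xElt, map_add, LinearMap.add_apply, _root_.map_smul, LinearMap.smul_apply, hHF]
    fin_cases j <;>
    · norm_num [cartanD21, Matrix.cons_val_two, Matrix.vecHead, Matrix.vecTail]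
      match_scalars
      all_goals field_simp
      all_goals ring
  have memE : ∀ i, E i ∈ Set.range E ∪ Set.range F := fun i => Or.inl ⟨i, rfl⟩
  have memF : ∀ i, F i ∈ Set.range E ∪ Set.range F := fun i => Or.inr ⟨i, rfl⟩
  have hxe : brk (xElt α H) e = e := by
    rw [he]
    simp only [map_add, _root_.map_smul, hxder, hxE, LinearMap.smul_apply]
    module
  have hxf : brk (xElt α H) f = -f := by
    rw [hf]
    simp only [map_add, hxder, hxF, _root_.map_smul, LinearMap.smul_apply]
    module
  refine ⟨hxe, hxf, ?_⟩
  -- key super-Jacobi expansions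
  have key : ∀ i j c, brk (brk (E i) (E j)) c
      = brk (E i) (brk (E j) c) + brk (E j) (brk (E i) c) := by
    intro i j c
    have := hJodd (E i) (memE i) (E j) (memE j) c
    linear_combination (norm := module) -this
  have v : ∀ j k l : Fin 3, brk (E j) (brk (F k) (F l))
      = brk (if j = k then H j else 0) (F l) - brk (F k) (if j = l then H j else 0) := by
    intro j k l
    rw [hJodd (E j) (memE j) (F k) (memF k) (F l), hEF, hEF]
  have vA : brk (E 0) (brk (F 0) (F 1)) = (-1 : ℂ) • F 1 := by
    rw [v]; simp [hHF, hFH, cartanD21]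
  have vB : brk (E 1) (brk (F 0) (F 1)) = (-1 : ℂ) • F 0 := by
    rw [v]; simp [hHF, hFH, cartanD21]
  have vC : brk (E 2) (brk (F 0) (F 1)) = 0 := by
    rw [v]; simp
  have vD : brk (E 0) (brk (F 0) (F 2)) = (-α) • F 2 := by
    rw [v]; simp [hHF, hFH, cartanD21]
  have vE : brk (E 1) (brk (F 0) (F 2)) = 0 := by
    rw [v]; simp
  have vF : brk (E 2) (brk (F 0) (F 2)) = (-α) • F 0 := by
    rw [v]; simp [hHF, hFH, cartanD21]
  have vG : brk (E 0) (brk (F 1) (F 2)) = 0 := by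
    rw [v]; simp
  have vH' : brk (E 1) (brk (F 1) (F 2)) = (1+α) • F 2 := by
    rw [v]; simp [hHF, hFH, cartanD21]; module
  have vI : brk (E 2) (brk (F 1) (F 2)) = (1+α) • F 1 := by
    rw [v]; simp [hHF, hFH, cartanD21]; module
  have P11 : brk (brk (E 0) (E 1)) (brk (F 0) (F 1)) = (-1 : ℂ) • H 0 + (-1 : ℂ) • H 1 := by
    rw [key, vA, vB]
    simp [hEF]
  have P12 : brk (brk (E 0) (E 1)) (brk (F 0) (F 2)) = 0 := by
    rw [key, vD, vE]
    simp [hEF]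
  have P13 : brk (brk (E 0) (E 1)) (brk (F 1) (F 2)) = 0 := by
    rw [key, vG, vH']
    simp [hEF]
  have P21 : brk (brk (E 0) (E 2)) (brk (F 0) (F 1)) = 0 := by
    rw [key, vA, vC]
    simp [hEF]
  have P22 : brk (brk (E 0) (E 2)) (brk (F 0) (F 2)) = (-α) • H 0 + (-α) • H 2 := by
    rw [key, vD, vF]
    simp [hEF]
  have P23 : brk (brk (E 0) (E 2)) (brk (F 1) (F 2)) = 0 := by
    rw [key, vG, vI]
    simp [hEF]
  have P31 : brk (brk (E 1) (E 2)) (brk (F 0) (F 1)) = 0 := by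
    rw [key, vB, vC]
    simp [hEF]
  have P32 : brk (brk (E 1) (E 2)) (brk (F 0) (F 2)) = 0 := by
    rw [key, vE, vF]
    simp [hEF]
  have P33 : brk (brk (E 1) (E 2)) (brk (F 1) (F 2)) = (1+α) • H 1 + (1+α) • H 2 := by
    rw [key, vH', vI]
    simp [hEF]
  rw [he, hf]
  simp only [map_add, _root_.map_smul, LinearMap.add_apply, LinearMap.smul_apply,
    P11, P12, P13, P21, P22, P23, P31, P32, P33, smul_zero, add_zero, zero_add]
  rw [xElt]
  match_scalars
  all_goals field_simp
  all_goals ring
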